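/- Let C be a counter machine and ℂ the Σ_C-Nmatrix induced by C. For all a, b ∈ ℕ_0, if a ≠ b then there exists a valuation v ∈ Val(ℂ) such that v(enc(a)) ≠ v(enc(b)). -/
import Mathlib



structure Signature where
  Conn : Type
  arity : Conn → ℕ

inductive Fm (S : Signature) : Type where
  | var : ℕ → Fm S
  | app : (c : S.Conn) → (Fin (S.arity c) → Fm S) → Fm S

def Fm.subst {S : Signature} (σ : ℕ → Fm S) : Fm S → Fm S
  | .var i => σ i
  | .app c args => .app c (fun j => (args j).subst σ)

def Fm.varsLT {S : Signature} (n : ℕ) : Fm S → Prop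
  | .var i => i < n
  | .app _ args => ∀ j, (args j).varsLT n

structure NMatrix (S : Signature) (V : Type) where
  D : Set V
  interp : (c : S.Conn) → (Fin (S.arity c) → V) → Set V
  interp_nonempty : ∀ c args, (interp c args).Nonempty

def IsVal {S : Signature} {V : Type} (M : NMatrix S V) (v : Fm S → V) : Prop :=
  ∀ (c : S.Conn) (args : Fin (S.arity c) → Fm S),
    v (Fm.app c args) ∈ M.interp c (fun i => v (args i))

def Entails {S : Signature} {V : Type} (M : NMatrix S V) (Γ : Set (Fm S)) (A : Fm S) : Prop :=
  ∀ v, IsVal M v → (∀ B ∈ Γ, v B ∈ M.D) → v A ∈ M.D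

def Interderiv {S : Signature} {V : Type} (M : NMatrix S V) (A B : Fm S) : Prop :=
  Entails M {A} B ∧ Entails M {B} A

def Deterministic {S : Signature} {V : Type} (M : NMatrix S V) : Prop :=
  ∀ c args, ∃ x, M.interp c args = {x}

inductive CMNum : Type where
  | r0 | ge0 | ge1 | ge2
deriving DecidableEq

inductive CMInstr (n : ℕ) (Q : Type) : Type where
  | inc : Fin n → Q → CMInstr n Q
  | dec : Fin n → Q → Q → CMInstr n Q

structure CounterMachine where
  n : ℕ
  Q : Type
  finQ : Finite Q
  qinit : Q
  δ : Q → Option (CMInstr n Q)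

inductive CMVal (C : CounterMachine) : Type where
  | num : CMNum → CMVal C
  | conf : C.Q → (Fin C.n → CMNum) → CMVal C
  | init : CMVal C
  | error : CMVal C

inductive CMConn (C : CounterMachine) : Type where
  | zero : CMConn C
  | eps : CMConn C
  | succ : CMConn C
  | step : C.Q → CMConn C

def CMSig (C : CounterMachine) : Signature where
  Conn := CMConn C
  arity := fun c => match c with
    | .zero => 0
    | .eps => 0
    | .succ => 1
    | .step _ => C.n + 1

/-- Interpretation of `succ` on abstract numbers. -/
def zeroNum : Set CMNum := {.r0, .ge0}

def succNum : CMNum → Set CMNum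
  | .r0 => {.ge1}
  | .ge0 => {.ge0, .ge1}
  | .ge1 => {.ge2}
  | .ge2 => {.ge2}

/-- Interpretation of `succ` in the Nmatrix induced by `C`. -/
def succC (C : CounterMachine) : CMVal C → Set (CMVal C)
  | .num x => CMVal.num '' succNum x
  | _ => {.error}

/-- Interpretation of `zero` in the Nmatrix induced by `C`. -/
def zeroC (C : CounterMachine) : Set (CMVal C) := {.num .r0, .num .ge0}

/-- The condition under which `step^q` applied to `x` and a tuple of numbers `zn`
produces the configuration value `conf q zn`. -/
def stepOK (C : CounterMachine) (q : C.Q) (x : CMVal C) (zn : Fin C.n → CMNum) : Prop :=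
  (x = CMVal.init ∧ q = C.qinit ∧ ((∀ i, zn i = .r0) ∨ (∀ i, zn i = .ge0))) ∨
  (∃ (q' : C.Q) (yn : Fin C.n → CMNum), x = CMVal.conf q' yn ∧
    ((∃ i, C.δ q' = some (.inc i q) ∧ zn i ∈ succNum (yn i) ∧ ∀ l, l ≠ i → zn l = yn l) ∨
     (∃ i s, C.δ q' = some (.dec i q s) ∧ yn i ∈ succNum (zn i) ∧ ∀ l, l ≠ i → zn l = yn l) ∨
     (∃ i s, C.δ q' = some (.dec i s q) ∧ yn i ∈ zeroNum ∧ zn = yn)))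

/-- Interpretation of `step^q` in the Nmatrix induced by `C`. -/
def stepC (C : CounterMachine) (q : C.Q) (x : CMVal C) (z : Fin C.n → CMVal C) :
    Set (CMVal C) :=
  { w | (∃ zn : Fin C.n → CMNum, (∀ i, z i = .num (zn i)) ∧ stepOK C q x zn ∧
          w = .conf q zn) ∨
        (¬ (∃ zn : Fin C.n → CMNum, (∀ i, z i = .num (zn i)) ∧ stepOK C q x zn) ∧
          w = .error) }

lemma succC_nonempty (C : CounterMachine) (x : CMVal C) : (succC C x).Nonempty := by
  cases x with
  | num y =>
      cases y
      · exact ⟨.num .ge1, by simp [succC, succNum]⟩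
      · exact ⟨.num .ge0, by simp [succC, succNum]⟩
      · exact ⟨.num .ge2, by simp [succC, succNum]⟩
      · exact ⟨.num .ge2, by simp [succC, succNum]⟩
  | conf q r => exact ⟨.error, rfl⟩
  | init => exact ⟨.error, rfl⟩
  | error => exact ⟨.error, rfl⟩

lemma stepC_nonempty (C : CounterMachine) (q : C.Q) (x : CMVal C)
    (z : Fin C.n → CMVal C) : (stepC C q x z).Nonempty := by
  by_cases h : ∃ zn : Fin C.n → CMNum, (∀ i, z i = .num (zn i)) ∧ stepOK C q x zn
  · obtain ⟨zn, hz, hok⟩ := h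
    exact ⟨.conf q zn, Or.inl ⟨zn, hz, hok, rfl⟩⟩
  · exact ⟨.error, Or.inr ⟨h, rfl⟩⟩

/-- The Nmatrix ℂ induced by the counter machine `C`. -/
def CMmatrix (C : CounterMachine) : NMatrix (CMSig C) (CMVal C) where
  D := { w | ∃ (q : C.Q) (r : Fin C.n → CMNum), w = CMVal.conf q r ∧ C.δ q = none }
  interp := fun c => match c with
    | .zero => fun _ => zeroC C
    | .eps => fun _ => {CMVal.init}
    | .succ => fun args => succC C (args ⟨0, Nat.one_pos⟩)
    | .step q => fun args => stepC C q (args ⟨0, Nat.succ_pos _⟩) (fun i => args i.succ)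
  interp_nonempty := by
    intro c args
    cases c with
    | zero => exact ⟨.num .r0, Or.inl rfl⟩
    | eps => exact ⟨.init, rfl⟩
    | succ => exact succC_nonempty C _
    | step q => exact stepC_nonempty C q _ _

/-- Encoding of natural numbers as closed formulas. -/
def enc (C : CounterMachine) : ℕ → Fm (CMSig C)
  | 0 => .app .zero (fun i => i.elim0)
  | a + 1 => .app .succ (fun _ => enc C a)

/-- Auxiliary: the number value assigned to depth `k` (switch after `m`). -/
def NN (m : ℕ) : ℕ → CMNum := fun k =>
  if k ≤ m then .ge0 else if k = m + 1 then .ge1 else .ge2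

lemma NN_succ (m k : ℕ) : NN m (k + 1) ∈ succNum (NN m k) := by
  unfold NN
  rcases le_or_gt (k + 1) m with h1 | h1
  · rw [if_pos h1, if_pos (by omega : k ≤ m)]; simp [succNum]
  · rw [if_neg (by omega : ¬ k + 1 ≤ m)]
    rcases eq_or_ne k m with h2 | h2
    · rw [if_pos (by omega : k ≤ m), if_pos (by omega : k + 1 = m + 1)]; simp [succNum]
    · rw [if_neg (by omega : ¬ k ≤ m), if_neg (by omega : ¬ k + 1 = m + 1)]
      rcases eq_or_ne k (m + 1) with h3 | h3
      · rw [if_pos h3]; simp [succNum]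
      · rw [if_neg h3]; simp [succNum]

/-- Depth of an `enc`-like formula. -/
def dd {C : CounterMachine} : Fm (CMSig C) → Option ℕ
  | .app .zero _ => some 0
  | .app .succ args => (dd (args ⟨0, Nat.one_pos⟩)).map (· + 1)
  | _ => none

open Classical in
/-- The distinguishing valuation. -/
noncomputable def myVal {C : CounterMachine} (m : ℕ) : Fm (CMSig C) → CMVal C
  | .var _ => .error
  | .app .zero _ => .num (NN m 0)
  | .app .eps _ => .init
  | .app .succ args =>
      match dd (args ⟨0, Nat.one_pos⟩) with
      | some k => .num (NN m (k + 1))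
      | none => .error
  | .app (.step q) args =>
      if h : ∃ zn : Fin C.n → CMNum, (∀ i, myVal m (args i.succ) = .num (zn i)) ∧
          stepOK C q (myVal m (args ⟨0, Nat.succ_pos _⟩)) zn
      then .conf q h.choose
      else .error

lemma myVal_num {C : CounterMachine} (m : ℕ) (A : Fm (CMSig C)) (k : ℕ)
    (h : dd A = some k) : myVal m A = .num (NN m k) := by
  cases A with
  | var i => simp [dd] at h
  | app c args =>
    cases c with
    | zero =>
        simp [dd] at h
        subst h; rfl
    | eps => simp [dd] at h
    | succ =>
        rcases hd : dd (args ⟨0, Nat.one_pos⟩) with _ | k'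
        · rw [dd, hd] at h; simp at h
        · rw [dd, hd] at h
          simp at h
          rw [myVal, hd]
          rw [← h]
    | step q => simp [dd] at h

lemma myVal_not_num {C : CounterMachine} (m : ℕ) (A : Fm (CMSig C))
    (h : dd A = none) (x : CMNum) : myVal m A ≠ .num x := by
  cases A with
  | var i => simp [myVal]
  | app c args =>
    cases c with
    | zero => simp [dd] at h
    | eps => simp [myVal]
    | succ =>
        rcases hd : dd (args ⟨0, Nat.one_pos⟩) with _ | k'
        · rw [myVal, hd]; simp
        · rw [dd, hd] at h; simp at h
    | step q =>
        rw [myVal]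
        split <;> simp

lemma myVal_isVal {C : CounterMachine} (m : ℕ) : IsVal (CMmatrix C) (myVal m) := by
  intro c args
  cases c with
  | zero =>
      show myVal m _ ∈ zeroC C
      have : myVal (C := C) m (.app .zero args) = .num (NN m 0) := rfl
      rw [this]
      have : NN m 0 = .ge0 := by simp [NN]
      rw [this]
      exact Or.inr rfl
  | eps => exact rfl
  | succ =>
      show myVal m _ ∈ succC C (myVal m (args ⟨0, Nat.one_pos⟩))
      rcases hd : dd (args ⟨0, Nat.one_pos⟩) with _ | k
      · have h1 : myVal (C := C) m (.app .succ args) = .error := by rw [myVal, hd]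
        rw [h1]
        have h2 := myVal_not_num m (args ⟨0, Nat.one_pos⟩) hd
        rcases hv : myVal m (args ⟨0, Nat.one_pos⟩) with y | _ | _ | _
        · exact absurd hv (h2 y)
        all_goals exact rfl
      · have h1 : myVal (C := C) m (.app .succ args) = .num (NN m (k + 1)) := by
          rw [myVal, hd]
        have h2 := myVal_num m (args ⟨0, Nat.one_pos⟩) k hd
        rw [h1, h2]
        exact ⟨NN m (k + 1), NN_succ m k, rfl⟩
  | step q =>
      show myVal m _ ∈ stepC C q (myVal m (args ⟨0, Nat.succ_pos _⟩))
        (fun i => myVal m (args i.succ))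
      by_cases h : ∃ zn : Fin C.n → CMNum, (∀ i, myVal m (args i.succ) = .num (zn i)) ∧
          stepOK C q (myVal m (args ⟨0, Nat.succ_pos _⟩)) zn
      · have h1 : myVal (C := C) m (.app (.step q) args) = .conf q h.choose := by
          rw [myVal]; rw [dif_pos h]
        rw [h1]
        exact Or.inl ⟨h.choose, h.choose_spec.1, h.choose_spec.2, rfl⟩
      · have h1 : myVal (C := C) m (.app (.step q) args) = .error := by
          rw [myVal]; rw [dif_neg h]
        rw [h1]
        exact Or.inr ⟨h, rfl⟩

lemma dd_enc (C : CounterMachine) (a : ℕ) : dd (enc C a) = some a := by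
  induction a with
  | zero => rfl
  | succ n ih => rw [enc, dd, ih]; rfl

/-- For the Nmatrix ℂ induced by a counter machine C, if a ≠ b then there is
a valuation v with v(enc(a)) ≠ v(enc(b)). -/
theorem stmt_6 (C : CounterMachine) (a b : ℕ) (h : a ≠ b) :
    ∃ v : Fm (CMSig C) → CMVal C, IsVal (CMmatrix C) v ∧
      v (enc C a) ≠ v (enc C b) := by
  set m := min a b with hm
  refine ⟨myVal m, myVal_isVal m, ?_⟩
  rw [myVal_num m (enc C a) a (dd_enc C a), myVal_num m (enc C b) b (dd_enc C b)]
  intro hcontra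
  have heq : NN m a = NN m b := by injection hcontra
  have : a ≠ b → NN m a ≠ NN m b := by
    intro hab
    rcases lt_or_gt_of_ne hab with hlt | hlt
    · have h1 : NN m a = .ge0 := by simp [NN, hm, min_le_left, le_min_iff, le_of_lt hlt]
      have h2 : ¬ b ≤ m := by omega
      have h3 : NN m b ≠ .ge0 := by
        unfold NN; split
        · omega
        · split <;> simp
      rw [h1]; exact fun he => h3 he.symm
    · have h1 : NN m b = .ge0 := by
        simp [NN, hm, min_le_right, le_min_iff, le_of_lt hlt]
      have h2 : ¬ a ≤ m := by omega
      have h3 : NN m a ≠ .ge0 := by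
        unfold NN; split
        · omega
        · split <;> simp
      intro he; exact h3 (h1 ▸ he)
  exact this h heq
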